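/- Let 𝒜 be a group automaton with state set Q over alphabet A, with final state set F, and let 𝒯 be the two-output transducer obtained from 𝒜 by replacing each transition p →a q with p →(a | a, ε) q if q ∈ F and with p →(a | ε, a) q if q ∉ F. Then the function mapping each finite run p →(u | v, w) q of 𝒯 to the triple (q, v, w) is injective: two runs with the same starting state p, same ending state q, and same output pair (v, w) have the same input word u (and are the same run). -/

import Mathlib

/-- The two-output transducer obtained from a DFA `M`: processing input `u` from state `p`,
each consumed symbol is appended to the first output if the reached state is final,
and to the second output otherwise.  `trun M p u = (q, v, w)` where `q` is the state
reached and `(v, w)` the pair of outputs. -/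
def trun {A Q : Type*} (M : DFA A Q) [DecidablePred (· ∈ M.accept)] :
    Q → List A → Q × List A × List A
  | p, [] => (p, [], [])
  | p, a :: u =>
    let q := M.step p a
    let r := trun M q u
    if q ∈ M.accept then (r.1, a :: r.2.1, r.2.2) else (r.1, r.2.1, a :: r.2.2)

lemma trun_len {A Q : Type*} (M : DFA A Q) [DecidablePred (· ∈ M.accept)]
    (p : Q) (u : List A) :
    (trun M p u).2.1.length + (trun M p u).2.2.length = u.length := by
  induction u generalizing p with
  | nil => simp [trun]
  | cons a t ih =>
    have := ih (M.step p a)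
    simp only [trun]
    split <;> simp <;> omega

lemma trun_snoc {A Q : Type*} (M : DFA A Q) [DecidablePred (· ∈ M.accept)]
    (p : Q) (u : List A) (a : A) :
    trun M p (u ++ [a]) =
      if M.step (trun M p u).1 a ∈ M.accept then
        (M.step (trun M p u).1 a, (trun M p u).2.1 ++ [a], (trun M p u).2.2)
      else
        (M.step (trun M p u).1 a, (trun M p u).2.1, (trun M p u).2.2 ++ [a]) := by
  induction u generalizing p with
  | nil => by_cases h : M.step p a ∈ M.accept <;> simp [trun, h]
  | cons b t ih =>
    simp only [List.cons_append, trun, List.append_eq]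
    rw [ih]
    by_cases hb : M.step p b ∈ M.accept <;>
    by_cases ha : M.step (trun M (M.step p b) t).1 a ∈ M.accept <;>
      simp [hb, ha]

theorem trun_injective {A Q : Type*} (M : DFA A Q) [DecidablePred (· ∈ M.accept)]
    (hG : ∀ a : A, Function.Bijective (fun q => M.step q a)) :
    ∀ (p : Q) (u u' : List A), trun M p u = trun M p u' → u = u' := by
  intro p u
  induction u using List.reverseRecOn with
  | nil =>
    intro u' h
    rcases u'.eq_nil_or_concat with rfl | ⟨t', a', rfl⟩
    · rfl
    · have hl := trun_len M p (t'.concat a')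
      rw [← h] at hl
      simp [trun] at hl
  | append_singleton t a ih =>
    intro u' h
    rcases u'.eq_nil_or_concat with rfl | ⟨t', a', rfl⟩
    · have hl := trun_len M p (t ++ [a])
      rw [h] at hl
      simp [trun] at hl
    · simp only [List.concat_eq_append] at h ⊢
      rw [trun_snoc, trun_snoc] at h
      set r := trun M p t with hr
      set r' := trun M p t' with hr'
      by_cases h1 : M.step r.1 a ∈ M.accept <;>
      by_cases h2 : M.step r'.1 a' ∈ M.accept <;>
        simp only [h1, h2, if_pos, if_neg, Prod.mk.injEq, ite_true, ite_false] at h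
      · obtain ⟨hq, hv, hw⟩ := h
        obtain ⟨hv', ha⟩ := List.append_inj' hv rfl
        obtain rfl : a = a' := by injection ha
        have hr1 : r.1 = r'.1 := (hG a).1 hq
        have : t = t' := ih t' ((Prod.ext hr1 (Prod.ext hv' hw)).trans hr'.symm)
        rw [this]
      · obtain ⟨hq, -, -⟩ := h
        rw [hq] at h1; exact absurd h1 h2
      · obtain ⟨hq, -, -⟩ := h
        rw [hq] at h1; exact absurd h2 h1
      · obtain ⟨hq, hv, hw⟩ := h
        obtain ⟨hw', ha⟩ := List.append_inj' hw rfl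
        obtain rfl : a = a' := by injection ha
        have hr1 : r.1 = r'.1 := (hG a).1 hq
        have : t = t' := ih t' ((Prod.ext hr1 (Prod.ext hv hw')).trans hr'.symm)
        rw [this]
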